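/- Fix a positive integer n. For i ∈ {1,…,n}, let θᵢ = (i−1)π/(2n), let xᵢ = (cos θᵢ, sin θᵢ) ∈ ℝ², and define the norm ρᵢ : ℝ² → ℝ by ρᵢ(v₁, v₂) = √( (v₁ cos θᵢ + v₂ sin θᵢ)² + 4(−v₁ sin θᵢ + v₂ cos θᵢ)² ) (i.e. rotate by −θᵢ, multiply the second coordinate by 2, and take the Euclidean norm). Then for every i, ρᵢ(xᵢ) = 1, and for every j ≠ i with 1 ≤ j ≤ n, ρᵢ(xⱼ) > 1. Consequently, with the query at the origin, each sample point xᵢ is the unique nearest neighbour of the origin among x₁, …, xₙ with respect to its own norm ρᵢ. -/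

import Mathlib

open Real

/-- Counterexample to a sample-dependent Stone's lemma: `n` points on the unit
circle such that each point `xᵢ` is the unique nearest neighbour of the origin
with respect to its own norm `ρᵢ` (rotation by `-θᵢ`, dilation of the second
coordinate by `2`, then the Euclidean norm). -/
theorem each_point_nearest_in_own_norm
    (n : ℕ) (hn : 0 < n)
    (θ : Fin n → ℝ) (hθ : ∀ i, θ i = (i : ℕ) * π / (2 * n))
    (x : Fin n → ℝ × ℝ) (hx : ∀ i, x i = (Real.cos (θ i), Real.sin (θ i)))
    (ρ : Fin n → ℝ × ℝ → ℝ)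
    (hρ : ∀ i (v : ℝ × ℝ), ρ i v =
      Real.sqrt ((v.1 * Real.cos (θ i) + v.2 * Real.sin (θ i)) ^ 2
        + 4 * (-v.1 * Real.sin (θ i) + v.2 * Real.cos (θ i)) ^ 2)) :
    ∀ i, ρ i (x i) = 1 ∧ ∀ j, j ≠ i → 1 < ρ i (x j) := by
  intro i
  -- key simplification: ρ i (x j) = √(1 + 3 sin (θ j - θ i)^2)
  have key : ∀ j, ρ i (x j) = Real.sqrt (1 + 3 * Real.sin (θ j - θ i) ^ 2) := by
    intro j
    rw [hρ, hx]
    congr 1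
    dsimp only
    have hc := Real.cos_sub (θ j) (θ i)
    have hs := Real.sin_sub (θ j) (θ i)
    have hpyth := Real.sin_sq_add_cos_sq (θ j - θ i)
    linear_combination hpyth
      - (Real.cos (θ j - θ i) + (Real.cos (θ j) * Real.cos (θ i) + Real.sin (θ j) * Real.sin (θ i))) * hc
      - 4 * (Real.sin (θ j - θ i) + (Real.sin (θ j) * Real.cos (θ i) - Real.cos (θ j) * Real.sin (θ i))) * hs
  constructor
  · rw [key i]
    simp
  · intro j hj
    rw [key j]
    have hrange : ∀ k : Fin n, 0 ≤ θ k ∧ θ k < π := by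
      intro k
      rw [hθ]
      have hπ := Real.pi_pos
      have hnp : (0:ℝ) < 2 * n := by positivity
      constructor
      · positivity
      · rw [div_lt_iff₀ hnp]
        have hk : (k : ℝ) < n := by exact_mod_cast k.isLt
        nlinarith
    have hne : θ j - θ i ≠ 0 := by
      intro h
      apply hj
      have : θ j = θ i := by linarith [sub_eq_zero.mp h]
      rw [hθ, hθ] at this
      have hπ := Real.pi_pos
      have hnp : (0:ℝ) < 2 * n := by positivity
      have : (j : ℝ) = i := by
        rw [div_left_inj' hnp.ne'] at this
        exact mul_right_cancel₀ hπ.ne' this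
      exact Fin.ext (by exact_mod_cast this)
    have hs : Real.sin (θ j - θ i) ≠ 0 := by
      intro h
      apply hne
      have h1 := (hrange j).1
      have h2 := (hrange j).2
      have h3 := (hrange i).1
      have h4 := (hrange i).2
      exact (Real.sin_eq_zero_iff_of_lt_of_lt (by linarith) (by linarith)).mp h
    have hpos : 0 < Real.sin (θ j - θ i) ^ 2 := by positivity
    calc (1:ℝ) = Real.sqrt 1 := Real.sqrt_one.symm
      _ < _ := Real.sqrt_lt_sqrt (by norm_num) (by linarith)
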